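/- Every polyhedron P ⊆ ℝᵐ is PL-homeomorphic to a rational polyhedron Q ⊆ ℝⁿ for some n, via a map carrying a given triangulation Σ of P to a unimodular triangulation Δ of Q that is isomorphic to Σ as a poset. -/

import Mathlib

open Geometry

/-- A polyhedron: a finite union of polytopes (convex hulls of finite sets). -/
def IsPolyhedron {E : Type*} [AddCommGroup E] [Module ℝ E] (P : Set E) : Prop :=
  ∃ S : Finset (Finset E), P = ⋃ s ∈ S, convexHull ℝ (s : Set E)

/-- A point of `ℝⁿ` is rational if all its coordinates are rational. -/
def IsRatPt {n : ℕ} (x : Fin n → ℝ) : Prop := ∀ i, ∃ q : ℚ, x i = (q : ℝ)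

/-- A rational polyhedron: a finite union of convex hulls of finite sets of
rational points. -/
def IsRatPolyhedron {n : ℕ} (P : Set (Fin n → ℝ)) : Prop :=
  ∃ S : Finset (Finset (Fin n → ℝ)),
    (∀ s ∈ S, ∀ x ∈ s, IsRatPt x) ∧ P = ⋃ s ∈ S, convexHull ℝ (s : Set (Fin n → ℝ))

/-- Denominator of a rational point. -/
def ratDen {n : ℕ} (x : Fin n → ℚ) : ℕ := Finset.univ.lcm fun i => (x i).den

/-- Homogeneous correspondent `x̃ ∈ ℤ^{n+1}` of a rational point. -/
def homogZ {n : ℕ} (x : Fin n → ℚ) : Fin (n + 1) → ℤ :=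
  Fin.snoc (fun i => ((ratDen x : ℚ) * x i).num) (ratDen x : ℤ)

/-- A finset of points of `ℝⁿ` is a unimodular simplex vertex set: all points are
rational and their homogeneous correspondents extend to a `ℤ`-basis of `ℤ^{n+1}`. -/
def IsUnimodular {n : ℕ} (s : Finset (Fin n → ℝ)) : Prop :=
  ∃ q : (Fin n → ℝ) → (Fin n → ℚ),
    (∀ v ∈ s, ∀ i, v i = ((q v i : ℚ) : ℝ)) ∧
    ∃ b : Module.Basis (Fin (n + 1)) ℤ (Fin (n + 1) → ℤ),
      ∀ v ∈ s, homogZ (q v) ∈ Set.range b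

/-- The graph of `f` restricted to `P`. -/
def graphOn {m n : ℕ} (f : (Fin m → ℝ) → (Fin n → ℝ)) (P : Set (Fin m → ℝ)) :
    Set ((Fin m → ℝ) × (Fin n → ℝ)) :=
  {p | p.1 ∈ P ∧ p.2 = f p.1}

open Geometry Finset

noncomputable section SB
open scoped Classical

variable {m : ℕ}

/-- weight representation of `x` as a convex combination of the points of `s`. -/
def SB.IsRep (s : Finset (Fin m → ℝ)) (w : (Fin m → ℝ) → ℝ) (x : Fin m → ℝ) : Prop :=
  (∀ v, v ∉ s → w v = 0) ∧ (∀ v ∈ s, 0 ≤ w v) ∧ ∑ v ∈ s, w v = 1 ∧ ∑ v ∈ s, w v • v = x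

namespace SB

lemma IsRep.mem_convexHull {s : Finset (Fin m → ℝ)} {w x} (h : IsRep s w x) :
    x ∈ convexHull ℝ (s : Set (Fin m → ℝ)) :=
  Finset.mem_convexHull'.2 ⟨w, h.2.1, h.2.2.1, h.2.2.2⟩

lemma exists_isRep {s : Finset (Fin m → ℝ)} {x} (hx : x ∈ convexHull ℝ (s : Set (Fin m → ℝ))) :
    ∃ w, IsRep s w x := by
  obtain ⟨w, hw0, hw1, hwx⟩ := Finset.mem_convexHull'.1 hx
  refine ⟨fun v => if v ∈ s then w v else 0, fun v hv => if_neg hv,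
    fun v hv => by simpa [if_pos hv] using hw0 v hv, ?_, ?_⟩
  · rw [← hw1]; exact Finset.sum_congr rfl fun v hv => by simp [if_pos hv]
  · rw [← hwx]; exact Finset.sum_congr rfl fun v hv => by simp [if_pos hv]

lemma IsRep.mono {s t : Finset (Fin m → ℝ)} {w x} (hst : s ⊆ t) (h : IsRep s w x) :
    IsRep t w x := by
  obtain ⟨h0, h1, h2, h3⟩ := h
  refine ⟨fun v hv => h0 v fun hvs => hv (hst hvs), fun v hv => ?_, ?_, ?_⟩
  · by_cases hvs : v ∈ s
    · exact h1 v hvs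
    · rw [h0 v hvs]
  · rw [← h2]; exact (Finset.sum_subset hst fun v _ hvs => h0 v hvs).symm
  · rw [← h3]; exact (Finset.sum_subset hst fun v _ hvs => by rw [h0 v hvs, zero_smul]).symm

lemma IsRep.unique_of_indep {s : Finset (Fin m → ℝ)} {w w' x}
    (hs : AffineIndependent ℝ ((↑) : s → (Fin m → ℝ)))
    (h : IsRep s w x) (h' : IsRep s w' x) : w = w' := by
  funext v
  by_cases hv : v ∈ s
  · exact hs.eq_of_sum_eq_sum_subtype (by rw [h.2.2.1, h'.2.2.1])
      (by rw [h.2.2.2, h'.2.2.2]) v hv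
  · rw [h.1 v hv, h'.1 v hv]

lemma IsRep.unique {K : SimplicialComplex ℝ (Fin m → ℝ)} {s t : Finset (Fin m → ℝ)} {w w' x}
    (hs : s ∈ K.faces) (ht : t ∈ K.faces) (h : IsRep s w x) (h' : IsRep t w' x) : w = w' := by
  have hx : x ∈ convexHull ℝ ((s : Set (Fin m → ℝ)) ∩ (t : Set (Fin m → ℝ))) :=
    K.inter_subset_convexHull hs ht ⟨h.mem_convexHull, h'.mem_convexHull⟩
  rw [← Finset.coe_inter] at hx
  obtain ⟨w'', hw''⟩ := exists_isRep hx
  have h1 := IsRep.unique_of_indep (K.indep hs) h (hw''.mono Finset.inter_subset_left)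
  have h2 := IsRep.unique_of_indep (K.indep ht) h' (hw''.mono Finset.inter_subset_right)
  rw [h1, h2]

/-- The (global) barycentric weight function of `x` with respect to `K`. -/
def wt (K : SimplicialComplex ℝ (Fin m → ℝ)) (x : Fin m → ℝ) : (Fin m → ℝ) → ℝ :=
  if h : ∃ p : Finset (Fin m → ℝ) × ((Fin m → ℝ) → ℝ), p.1 ∈ K.faces ∧ IsRep p.1 p.2 x
  then h.choose.2 else 0

lemma wt_eq {K : SimplicialComplex ℝ (Fin m → ℝ)} {s w x} (hs : s ∈ K.faces)
    (hw : IsRep s w x) : wt K x = w := by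
  have h : ∃ p : Finset (Fin m → ℝ) × ((Fin m → ℝ) → ℝ), p.1 ∈ K.faces ∧ IsRep p.1 p.2 x :=
    ⟨(s, w), hs, hw⟩
  rw [wt, dif_pos h]
  exact IsRep.unique h.choose_spec.1 hs h.choose_spec.2 hw

lemma wt_isRep {K : SimplicialComplex ℝ (Fin m → ℝ)} {s x} (hs : s ∈ K.faces)
    (hx : x ∈ convexHull ℝ (s : Set (Fin m → ℝ))) : IsRep s (wt K x) x := by
  obtain ⟨w, hw⟩ := exists_isRep hx
  rw [wt_eq hs hw]; exact hw



variable (K : SimplicialComplex ℝ (Fin m → ℝ)) (hK : K.faces.Finite)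

/-- All vertices of `K`. -/
def L : Finset (Fin m → ℝ) := hK.toFinset.sup id

lemma subset_L {s} (hs : s ∈ K.faces) : s ⊆ L K hK :=
  Finset.le_sup (f := id) (hK.mem_toFinset.2 hs)

/-- Dimension of the target space. -/
def nn : ℕ := (L K hK).card

/-- Enumeration of the vertices. -/
def eqv : {x // x ∈ L K hK} ≃ Fin (nn K hK) := (L K hK).equivFin

/-- The vertex map, sending the vertices of `K` to standard basis vectors. -/
def phi : (Fin m → ℝ) → Fin (nn K hK) → ℝ := fun v j =>
  if hv : v ∈ L K hK then (if j = eqv K hK ⟨v, hv⟩ then 1 else 0) else 0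

lemma phi_apply {v} (hv : v ∈ L K hK) (j) :
    phi K hK v j = if j = eqv K hK ⟨v, hv⟩ then 1 else 0 := dif_pos hv

lemma phi_injOn {v u} (hv : v ∈ L K hK) (hu : u ∈ L K hK)
    (h : phi K hK v = phi K hK u) : v = u := by
  have h1 := congrFun h (eqv K hK ⟨v, hv⟩)
  rw [phi_apply K hK hv, phi_apply K hK hu, if_pos rfl] at h1
  by_cases h2 : eqv K hK ⟨v, hv⟩ = eqv K hK ⟨u, hu⟩
  · have := (eqv K hK).injective h2
    exact congrArg Subtype.val this
  · rw [if_neg h2] at h1; norm_num at h1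

/-- Key computation: a combination of images of vertices, evaluated at a coordinate. -/
lemma sum_smul_phi_apply {s : Finset (Fin m → ℝ)} (hs : s ⊆ L K hK)
    (c : (Fin m → ℝ) → ℝ) (j : Fin (nn K hK)) :
    (∑ v ∈ s, c v • phi K hK v) j
      = if ((eqv K hK).symm j : Fin m → ℝ) ∈ s then c ((eqv K hK).symm j) else 0 := by
  rw [Finset.sum_apply]
  by_cases h : ((eqv K hK).symm j : Fin m → ℝ) ∈ s
  · rw [if_pos h, Finset.sum_eq_single (((eqv K hK).symm j : Fin m → ℝ))]
    · rw [Pi.smul_apply, smul_eq_mul, phi_apply K hK (hs h), if_pos, mul_one]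
      rw [Subtype.coe_eta, Equiv.apply_symm_apply]
    · intro v hv hne
      rw [Pi.smul_apply, smul_eq_mul, phi_apply K hK (hs hv), if_neg, mul_zero]
      intro hj
      apply hne
      have : (eqv K hK).symm j = ⟨v, hs hv⟩ := by rw [hj, Equiv.symm_apply_apply]
      rw [this]
    · intro h'; exact absurd h h'
  · rw [if_neg h]
    refine Finset.sum_eq_zero fun v hv => ?_
    rw [Pi.smul_apply, smul_eq_mul, phi_apply K hK (hs hv), if_neg, mul_zero]
    intro hj
    apply h
    have : (eqv K hK).symm j = ⟨v, hs hv⟩ := by rw [hj, Equiv.symm_apply_apply]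
    rw [this]; exact hv

/-- The forward PL map. -/
def fmap : (Fin m → ℝ) → Fin (nn K hK) → ℝ :=
  fun x j => wt K x ((eqv K hK).symm j : Fin m → ℝ)

/-- The (linear) inverse PL map. -/
def gmap : (Fin (nn K hK) → ℝ) → (Fin m → ℝ) :=
  fun y => ∑ v ∈ (L K hK).attach, y (eqv K hK v) • (v : Fin m → ℝ)

lemma fmap_eq {s : Finset (Fin m → ℝ)} {w x} (hs : s ∈ K.faces) (hw : IsRep s w x) :
    fmap K hK x = ∑ v ∈ s, w v • phi K hK v := by
  funext j
  rw [sum_smul_phi_apply K hK (subset_L K hK hs) w j]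
  rw [fmap, wt_eq hs hw]
  by_cases h : ((eqv K hK).symm j : Fin m → ℝ) ∈ s
  · rw [if_pos h]
  · rw [if_neg h, hw.1 _ h]

lemma gmap_fmap {s : Finset (Fin m → ℝ)} {w x} (hs : s ∈ K.faces) (hw : IsRep s w x) :
    gmap K hK (fmap K hK x) = x := by
  rw [gmap]
  have h1 : ∀ v ∈ (L K hK).attach,
      fmap K hK x (eqv K hK v) • (v : Fin m → ℝ) = w ↑v • (v : Fin m → ℝ) := by
    intro v _
    rw [fmap, wt_eq hs hw, Equiv.symm_apply_apply]
  rw [Finset.sum_congr rfl h1, Finset.sum_attach (L K hK) (fun v => w v • v),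
    ← Finset.sum_subset (subset_L K hK hs) (fun v _ hvs => by rw [hw.1 v hvs, zero_smul])]
  exact hw.2.2.2

/-- A convex combination of images lies in the hull of the image. -/
lemma combo_mem_hull_image {α : Type*} {β : Type*} [AddCommGroup β] [Module ℝ β]
    [DecidableEq β] (s : Finset α) (ψ : α → β) (w : α → ℝ)
    (h0 : ∀ v ∈ s, 0 ≤ w v) (h1 : ∑ v ∈ s, w v = 1) :
    (∑ v ∈ s, w v • ψ v) ∈ convexHull ℝ ((s.image ψ : Finset β) : Set β) := by
  refine mem_convexHull_of_exists_fintype (ι := {v // v ∈ s}) (fun i => w ↑i) (fun i => ψ ↑i)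
    (fun i => h0 ↑i i.2) ?_ (fun i => Finset.mem_coe.2 (Finset.mem_image_of_mem ψ i.2)) ?_
  · rw [← h1]; exact Finset.sum_coe_sort s w
  · exact Finset.sum_coe_sort s (fun v => w v • ψ v)

lemma fmap_mem {s : Finset (Fin m → ℝ)} {w x} (hs : s ∈ K.faces) (hw : IsRep s w x) :
    fmap K hK x ∈ convexHull ℝ ((s.image (phi K hK) : Finset _) : Set (Fin (nn K hK) → ℝ)) := by
  rw [fmap_eq K hK hs hw]
  exact combo_mem_hull_image s (phi K hK) w hw.2.1 hw.2.2.1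

lemma exists_rep_of_mem_image_hull {s : Finset (Fin m → ℝ)} (hs : s ∈ K.faces) {y}
    (hy : y ∈ convexHull ℝ ((s.image (phi K hK) : Finset _) : Set (Fin (nn K hK) → ℝ))) :
    ∃ w, IsRep s w (gmap K hK y) ∧ y = ∑ v ∈ s, w v • phi K hK v := by
  obtain ⟨u, hu0, hu1, hu2⟩ := Finset.mem_convexHull'.1 hy
  have hinj : ∀ v ∈ s, ∀ v' ∈ s, phi K hK v = phi K hK v' → v = v' := fun a ha b hb h =>
    phi_injOn K hK (subset_L K hK hs ha) (subset_L K hK hs hb) h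
  set w : (Fin m → ℝ) → ℝ := fun v => if hv : v ∈ s then u (phi K hK v) else 0 with hwdef
  have hws : ∀ v ∈ s, w v = u (phi K hK v) := fun v hv => dif_pos hv
  have hsum : ∑ v ∈ s, w v = 1 := by
    rw [Finset.sum_congr rfl hws, ← Finset.sum_image hinj]; exact hu1
  have hcombo : y = ∑ v ∈ s, w v • phi K hK v := by
    have himg : ∑ t ∈ s.image (phi K hK), u t • t
        = ∑ v ∈ s, u (phi K hK v) • phi K hK v := Finset.sum_image hinj
    rw [Finset.sum_congr rfl (fun v hv => by rw [hws v hv]), ← himg]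
    exact hu2.symm
  have hg : gmap K hK y = ∑ v ∈ s, w v • v := by
    rw [gmap]
    have h1 : ∀ v ∈ (L K hK).attach, y (eqv K hK v) • (v : Fin m → ℝ) = w ↑v • (v : Fin m → ℝ) := by
      intro v _
      congr 1
      rw [hcombo, sum_smul_phi_apply K hK (subset_L K hK hs) w (eqv K hK v),
        Equiv.symm_apply_apply]
      by_cases h : (v : Fin m → ℝ) ∈ s
      · rw [if_pos h]
      · rw [if_neg h]; exact (show w ↑v = 0 from dif_neg h).symm
    rw [Finset.sum_congr rfl h1, Finset.sum_attach (L K hK) (fun v => w v • v)]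
    exact (Finset.sum_subset (subset_L K hK hs)
      (fun v _ hvs => by rw [show w v = 0 from dif_neg hvs, zero_smul])).symm
  refine ⟨w, ⟨fun v hv => dif_neg hv,
    fun v hv => by rw [hws v hv]; exact hu0 _ (Finset.mem_image_of_mem _ hv),
    hsum, hg.symm⟩, hcombo⟩

lemma fmap_gmap {s : Finset (Fin m → ℝ)} (hs : s ∈ K.faces) {y}
    (hy : y ∈ convexHull ℝ ((s.image (phi K hK) : Finset _) : Set (Fin (nn K hK) → ℝ))) :
    fmap K hK (gmap K hK y) = y := by
  obtain ⟨w, hw, hc⟩ := exists_rep_of_mem_image_hull K hK hs hy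
  rw [fmap_eq K hK hs hw, ← hc]

lemma image_hull {s : Finset (Fin m → ℝ)} (hs : s ∈ K.faces) :
    fmap K hK '' convexHull ℝ (s : Set (Fin m → ℝ))
      = convexHull ℝ ((s.image (phi K hK) : Finset _) : Set (Fin (nn K hK) → ℝ)) := by
  ext y
  constructor
  · rintro ⟨x, hx, rfl⟩
    obtain ⟨w, hw⟩ := exists_isRep hx
    exact fmap_mem K hK hs hw
  · intro hy
    obtain ⟨w, hw, hc⟩ := exists_rep_of_mem_image_hull K hK hs hy
    exact ⟨gmap K hK y, hw.mem_convexHull, fmap_gmap K hK hs hy⟩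

lemma gmap_phi {v} (hv : v ∈ L K hK) : gmap K hK (phi K hK v) = v := by
  rw [gmap, Finset.sum_eq_single (⟨v, hv⟩ : {x // x ∈ L K hK})]
  · rw [phi_apply K hK hv, if_pos rfl, one_smul]
  · intro u _ hne
    rw [phi_apply K hK hv, if_neg, zero_smul]
    intro h
    exact hne ((eqv K hK).injective h)
  · intro h; exact absurd (Finset.mem_attach _ _) h


/-- The standard "unit corner" family in `ℝⁿ` is affinely independent. -/
lemma affineIndependent_std (n : ℕ) :
    AffineIndependent ℝ (fun j : Fin n => (fun i => if i = j then (1 : ℝ) else 0 : Fin n → ℝ)) := by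
  rw [affineIndependent_iff]
  intro s w h0 h1 e he
  have h2 := congrFun h1 e
  rw [Finset.sum_apply] at h2
  have h3 : ∀ j ∈ s, (w j • (fun i => if i = j then (1 : ℝ) else 0 : Fin n → ℝ)) e
      = if e = j then w j else 0 := by
    intro j _
    rw [Pi.smul_apply, smul_eq_mul]
    by_cases h : e = j <;> simp [h]
  rw [Finset.sum_congr rfl h3, Finset.sum_ite_eq s e w, if_pos he] at h2
  simpa using h2

lemma phi_mem_range_std {v} (hv : v ∈ L K hK) :
    phi K hK v ∈ Set.range (fun j : Fin (nn K hK) =>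
      (fun i => if i = j then (1 : ℝ) else 0 : Fin (nn K hK) → ℝ)) := by
  exact ⟨eqv K hK ⟨v, hv⟩, by funext i; rw [phi_apply K hK hv]⟩

lemma affineIndependent_image_phi {t : Finset (Fin m → ℝ)} (ht : t ⊆ L K hK) :
    AffineIndependent ℝ ((↑) : (t.image (phi K hK) : Finset _) → (Fin (nn K hK) → ℝ)) := by
  have h1 : ((t.image (phi K hK) : Finset _) : Set (Fin (nn K hK) → ℝ))
      ⊆ Set.range (fun j : Fin (nn K hK) =>
        (fun i => if i = j then (1 : ℝ) else 0 : Fin (nn K hK) → ℝ)) := by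
    intro x hx
    obtain ⟨v, hv, rfl⟩ := Finset.mem_image.1 (Finset.mem_coe.1 hx)
    exact phi_mem_range_std K hK (ht hv)
  exact ((affineIndependent_std (nn K hK)).range).mono h1

/-- The image simplicial complex. -/
def Delta : SimplicialComplex ℝ (Fin (nn K hK) → ℝ) where
  faces := (Finset.image (phi K hK)) '' K.faces
  indep := by
    rintro t ⟨s, hs, rfl⟩
    exact affineIndependent_image_phi K hK (subset_L K hK hs)
  isRelLowerSet_faces := by
    rintro t ⟨s, hs, rfl⟩
    refine ⟨(K.nonempty_of_mem_faces hs).image _, ?_⟩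
    intro t' ht' hne
    refine ⟨s.filter (fun v => phi K hK v ∈ t'), K.down_closed hs (Finset.filter_subset _ _) ?_, ?_⟩
    · obtain ⟨y, hy⟩ := hne
      obtain ⟨v, hv, rfl⟩ := Finset.mem_image.1 (ht' hy)
      exact ⟨v, Finset.mem_filter.2 ⟨hv, hy⟩⟩
    · ext y
      simp only [Finset.mem_image, Finset.mem_filter]
      constructor
      · rintro ⟨v, ⟨hv, hvt⟩, rfl⟩; exact hvt
      · intro hy
        obtain ⟨v, hv, rfl⟩ := Finset.mem_image.1 (ht' hy)
        exact ⟨v, ⟨hv, hy⟩, rfl⟩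
  inter_subset_convexHull := by
    rintro t₁ t₂ ⟨s₁, hs₁, rfl⟩ ⟨s₂, hs₂, rfl⟩
    have hL := affineIndependent_image_phi K hK (le_refl (L K hK))
    have h := hL.convexHull_inter
      (Finset.image_subset_image (subset_L K hK hs₁))
      (Finset.image_subset_image (subset_L K hK hs₂))
    exact h.symm.subset


/-- The shear automorphism of `ℤ^{n+1}` whose last output coordinate is the sum of all inputs. -/
def shear (n : ℕ) : (Fin (n + 1) → ℤ) ≃ₗ[ℤ] (Fin (n + 1) → ℤ) where
  toFun x := fun i => if i = Fin.last n then ∑ k, x k else x i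
  invFun x := fun i => if i = Fin.last n
    then x (Fin.last n) - ∑ k ∈ Finset.univ.erase (Fin.last n), x k else x i
  map_add' x y := by
    funext i
    by_cases h : i = Fin.last n <;> simp [h, Finset.sum_add_distrib]
  map_smul' c x := by
    funext i
    by_cases h : i = Fin.last n <;> simp [h, Finset.mul_sum]
  left_inv x := by
    funext i
    show (if i = Fin.last n
        then (if Fin.last n = Fin.last n then ∑ k, x k else x (Fin.last n))
          - ∑ k ∈ Finset.univ.erase (Fin.last n), (if k = Fin.last n then ∑ k', x k' else x k)
        else (if i = Fin.last n then ∑ k, x k else x i)) = x i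
    by_cases h : i = Fin.last n
    · subst h
      rw [if_pos rfl, if_pos rfl,
        Finset.sum_congr rfl (fun k hk => if_neg (Finset.mem_erase.1 hk).1),
        ← Finset.sum_erase_add Finset.univ x (Finset.mem_univ (Fin.last n))]
      ring
    · rw [if_neg h, if_neg h]
  right_inv x := by
    funext i
    show (if i = Fin.last n
        then ∑ k, (if k = Fin.last n
          then x (Fin.last n) - ∑ k' ∈ Finset.univ.erase (Fin.last n), x k' else x k)
        else (if i = Fin.last n
          then x (Fin.last n) - ∑ k' ∈ Finset.univ.erase (Fin.last n), x k' else x i)) = x i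
    by_cases h : i = Fin.last n
    · subst h
      rw [if_pos rfl,
        ← Finset.sum_erase_add Finset.univ _ (Finset.mem_univ (Fin.last n)),
        Finset.sum_congr rfl (fun k hk => if_neg (Finset.mem_erase.1 hk).1), if_pos rfl]
      ring
    · rw [if_neg h, if_neg h]

/-- The unimodular basis of `ℤ^{n+1}` consisting of homogenized unit vectors. -/
def ubasis (n : ℕ) : Module.Basis (Fin (n + 1)) ℤ (Fin (n + 1) → ℤ) :=
  (Pi.basisFun ℤ (Fin (n + 1))).map (shear n)

lemma shear_apply (n : ℕ) (x : Fin (n + 1) → ℤ) (i : Fin (n + 1)) :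
    shear n x i = if i = Fin.last n then ∑ k, x k else x i := rfl

lemma ubasis_castSucc (n : ℕ) (j : Fin n) :
    ubasis n (Fin.castSucc j) = Fin.snoc (fun i => if i = j then (1 : ℤ) else 0) (1 : ℤ) := by
  funext i
  rw [ubasis, Module.Basis.map_apply, Pi.basisFun_apply, shear_apply]
  refine Fin.lastCases ?_ (fun i' => ?_) i
  · rw [if_pos rfl, Fin.snoc_last]
    simp [Finset.sum_pi_single']
  · rw [if_neg (Fin.castSucc_lt_last i').ne, Fin.snoc_castSucc, Pi.single_apply]
    simp [Fin.castSucc_inj, eq_comm]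

/-- Rationalization of 0/1-vectors. -/
def qq (n' : ℕ) : (Fin n' → ℝ) → (Fin n' → ℚ) := fun v i => if v i = 1 then 1 else 0

lemma homogZ_std (n : ℕ) (j : Fin n) :
    homogZ (fun i => if i = j then (1 : ℚ) else 0) = ubasis n (Fin.castSucc j) := by
  have hden : ratDen (fun i => if i = j then (1 : ℚ) else 0) = 1 := by
    apply Nat.dvd_one.mp
    apply Finset.lcm_dvd
    intro i _
    by_cases h : i = j <;> simp [h]
  rw [ubasis_castSucc, homogZ, hden]
  refine congrArg₂ (fun a b => Fin.snoc a b) ?_ (by norm_num)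
  funext i
  by_cases h : i = j <;> simp [h]

lemma isUnimodular_face {t} (ht : t ∈ (Delta K hK).faces) : IsUnimodular t := by
  obtain ⟨s, hs, rfl⟩ := ht
  refine ⟨qq (nn K hK), ?_, ubasis (nn K hK), ?_⟩
  · intro v hv i
    obtain ⟨u, hu, rfl⟩ := Finset.mem_image.1 hv
    have hL := subset_L K hK hs hu
    have hqq : qq (nn K hK) (phi K hK u) i
        = if i = eqv K hK ⟨u, hL⟩ then (1 : ℚ) else 0 := by
      rw [qq, phi_apply K hK hL]
      by_cases h : i = eqv K hK ⟨u, hL⟩ <;> simp [h]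
    rw [hqq, phi_apply K hK hL]
    by_cases h : i = eqv K hK ⟨u, hL⟩ <;> simp [h]
  · intro v hv
    obtain ⟨u, hu, rfl⟩ := Finset.mem_image.1 hv
    have hq : qq (nn K hK) (phi K hK u)
        = fun i => if i = eqv K hK ⟨u, subset_L K hK hs hu⟩ then (1 : ℚ) else 0 := by
      funext i
      rw [qq, phi_apply K hK (subset_L K hK hs hu)]
      by_cases h : i = eqv K hK ⟨u, subset_L K hK hs hu⟩ <;> simp [h]
    rw [hq, homogZ_std]
    exact ⟨_, rfl⟩


lemma continuousWithinAt_empty' {α β : Type*} [TopologicalSpace α] [TopologicalSpace β]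
    (f : α → β) (x : α) : ContinuousWithinAt f ∅ x := by
  rw [ContinuousWithinAt, nhdsWithin_empty]
  exact Filter.tendsto_bot

lemma cwa_biUnion {α β ι : Type*} [TopologicalSpace α] [TopologicalSpace β] {f : α → β} {x : α}
    (S : Finset ι) (C : ι → Set α) :
    (∀ i ∈ S, ContinuousWithinAt f (C i) x) →
      ContinuousWithinAt f (⋃ i ∈ S, C i) x := by
  classical
  refine Finset.induction_on S (fun _ => ?_) (fun a S' _ ih h => ?_)
  · simp only [Finset.notMem_empty, Set.iUnion_of_empty, Set.iUnion_empty]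
    exact continuousWithinAt_empty' f x
  · rw [Finset.set_biUnion_insert]
    exact (h a (Finset.mem_insert_self a S')).union (ih fun i hi => h i (Finset.mem_insert_of_mem hi))

lemma continuousOn_face {s : Finset (Fin m → ℝ)} (hs : s ∈ K.faces) :
    ContinuousOn (fmap K hK) (convexHull ℝ (s : Set (Fin m → ℝ))) := by
  obtain ⟨tset, hsub, hind, htot⟩ := exists_subset_affineIndependent_affineSpan_eq_top
    (k := ℝ) (K.indep hs)
  set b : AffineBasis tset ℝ (Fin m → ℝ) :=
    ⟨fun p => (p : Fin m → ℝ), hind, by rwa [Subtype.range_coe]⟩ with hb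
  have hbp : ∀ p : tset, b p = (p : Fin m → ℝ) := fun p => rfl
  have hssub : ∀ {v}, v ∈ s → v ∈ tset := fun {v} hv => hsub hv
  -- key : barycentric weights are given by the affine basis coordinates
  have key : ∀ x ∈ convexHull ℝ (s : Set (Fin m → ℝ)), ∀ (v) (hv : v ∈ s),
      wt K x v = b.coord ⟨v, hssub hv⟩ x := by
    intro x hx v hv
    have hrep := wt_isRep hs hx
    let em : {x // x ∈ s} ↪ {x // x ∈ tset} :=
      Subtype.impEmbedding _ _ (fun x hx => hssub hx)
    set F : Finset tset := s.attach.map em with hF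
    have hem : ∀ u : {x // x ∈ s}, (em u : Fin m → ℝ) = (u : Fin m → ℝ) := fun u => rfl
    have hW : ∑ u ∈ F, wt K x (u : Fin m → ℝ) = 1 := by
      rw [hF, Finset.sum_map]
      simp only [hem]
      rw [Finset.sum_attach s (fun v => wt K x v)]
      exact hrep.2.2.1
    have hmem : (⟨v, hssub hv⟩ : tset) ∈ F := by
      rw [hF, Finset.mem_map]
      exact ⟨⟨v, hv⟩, Finset.mem_attach _ _, Subtype.ext (hem ⟨v, hv⟩)⟩
    have hcomb : F.affineCombination ℝ (fun p : tset => (p : Fin m → ℝ))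
        (fun u => wt K x (u : Fin m → ℝ)) = x := by
      rw [Finset.affineCombination_eq_linear_combination _ _ _ hW, hF, Finset.sum_map]
      simp only [hem]
      rw [Finset.sum_attach s (fun v => wt K x v • v)]
      exact hrep.2.2.2
    have h1 := b.coord_apply_combination_of_mem hmem hW
    rw [show (F.affineCombination ℝ b fun u => wt K x (u : Fin m → ℝ))
        = F.affineCombination ℝ (fun p : tset => (p : Fin m → ℝ))
            (fun u => wt K x (u : Fin m → ℝ)) from rfl, hcomb] at h1
    exact h1.symm
  refine ContinuousOn.congr
    (f := fun x j => if h : ((eqv K hK).symm j : Fin m → ℝ) ∈ s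
      then b.coord ⟨((eqv K hK).symm j : Fin m → ℝ), hssub h⟩ x else 0) ?_ ?_
  · refine continuousOn_pi.2 fun j => ?_
    by_cases h : ((eqv K hK).symm j : Fin m → ℝ) ∈ s
    · simp only [dif_pos h]
      exact (continuous_barycentric_coord b _).continuousOn
    · simp only [dif_neg h]
      exact continuousOn_const
  · intro x hx
    have hrep := wt_isRep hs hx
    funext j
    by_cases h : ((eqv K hK).symm j : Fin m → ℝ) ∈ s
    · simp only [dif_pos h]
      exact key x hx _ h
    · simp only [dif_neg h]
      exact hrep.1 _ h

lemma mem_space_of_mem_hull {s : Finset (Fin m → ℝ)} (hs : s ∈ K.faces) {x}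
    (hx : x ∈ convexHull ℝ (s : Set (Fin m → ℝ))) : x ∈ K.space :=
  Set.mem_biUnion hs hx

lemma space_eq_biUnion : K.space = ⋃ s ∈ hK.toFinset, convexHull ℝ ((s : Finset _) : Set (Fin m → ℝ)) := by
  ext x
  simp only [SimplicialComplex.space, Set.mem_iUnion, Set.Finite.mem_toFinset]

lemma continuousOn_fmap : ContinuousOn (fmap K hK) K.space := by
  intro x hx
  rw [space_eq_biUnion K hK]
  apply cwa_biUnion
  intro s hsf
  have hs : s ∈ K.faces := hK.mem_toFinset.1 hsf
  by_cases h : x ∈ convexHull ℝ ((s : Finset _) : Set (Fin m → ℝ))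
  · exact continuousOn_face K hK hs x h
  · refine continuousWithinAt_of_notMem_closure ?_
    rwa [IsClosed.closure_eq (s.finite_toSet.isClosed_convexHull ℝ)]

lemma continuous_gmap : Continuous (gmap K hK) := by
  apply continuous_finset_sum
  intro v _
  exact ((continuous_apply (eqv K hK v)).smul continuous_const)


lemma sum_smul_pair {s : Finset (Fin m → ℝ)} (w : (Fin m → ℝ) → ℝ) :
    ∑ v ∈ s, w v • ((v, phi K hK v) : (Fin m → ℝ) × (Fin (nn K hK) → ℝ))
      = (∑ v ∈ s, w v • v, ∑ v ∈ s, w v • phi K hK v) := by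
  refine Prod.ext ?_ ?_
  · rw [Prod.fst_sum]; exact Finset.sum_congr rfl fun v _ => rfl
  · rw [Prod.snd_sum]; exact Finset.sum_congr rfl fun v _ => rfl

/-- The graph of `f` over the space of `K` is a finite union of simplices. -/
lemma graph_fmap_eq : {p : (Fin m → ℝ) × (Fin (nn K hK) → ℝ) | p.1 ∈ K.space ∧ p.2 = fmap K hK p.1}
    = ⋃ s ∈ K.faces, convexHull ℝ
        ((s.image (fun v => (v, phi K hK v)) : Finset _) : Set ((Fin m → ℝ) × (Fin (nn K hK) → ℝ))) := by
  ext p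
  constructor
  · rintro ⟨hp1, hp2⟩
    rw [SimplicialComplex.space, Set.mem_iUnion₂] at hp1
    obtain ⟨s, hs, hx⟩ := hp1
    obtain ⟨w, hw⟩ := exists_isRep hx
    refine Set.mem_biUnion hs ?_
    have hp : p = ∑ v ∈ s, w v • ((v, phi K hK v) : (Fin m → ℝ) × (Fin (nn K hK) → ℝ)) := by
      rw [sum_smul_pair]
      refine Prod.ext ?_ ?_
      · exact hw.2.2.2.symm
      · rw [hp2, fmap_eq K hK hs hw]
    rw [hp]
    exact combo_mem_hull_image s _ w hw.2.1 hw.2.2.1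
  · intro hp
    rw [Set.mem_iUnion₂] at hp
    obtain ⟨s, hs, hp⟩ := hp
    obtain ⟨u, hu0, hu1, hu2⟩ := Finset.mem_convexHull'.1 hp
    have hinj : ∀ v ∈ s, ∀ v' ∈ s,
        ((v, phi K hK v) : (Fin m → ℝ) × (Fin (nn K hK) → ℝ)) = (v', phi K hK v') → v = v' :=
      fun a _ b _ h => congrArg Prod.fst h
    set w : (Fin m → ℝ) → ℝ := fun v => if hv : v ∈ s then u (v, phi K hK v) else 0 with hwdef
    have hws : ∀ v ∈ s, w v = u (v, phi K hK v) := fun v hv => dif_pos hv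
    have hsum : ∑ v ∈ s, w v = 1 := by
      have himg : ∑ t ∈ s.image (fun v => ((v, phi K hK v) : (Fin m → ℝ) × (Fin (nn K hK) → ℝ))), u t
          = ∑ v ∈ s, u (v, phi K hK v) := Finset.sum_image hinj
      rw [Finset.sum_congr rfl hws, ← himg]
      exact hu1
    have hcombo : p = ∑ v ∈ s, w v • ((v, phi K hK v) : (Fin m → ℝ) × (Fin (nn K hK) → ℝ)) := by
      have himg : ∑ t ∈ s.image (fun v => ((v, phi K hK v) : (Fin m → ℝ) × (Fin (nn K hK) → ℝ))), u t • t
          = ∑ v ∈ s, u (v, phi K hK v) • ((v, phi K hK v) : (Fin m → ℝ) × (Fin (nn K hK) → ℝ)) :=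
        Finset.sum_image hinj
      rw [Finset.sum_congr rfl (fun v hv => by rw [hws v hv]), ← himg]
      exact hu2.symm
    have hrep : IsRep s w (∑ v ∈ s, w v • v) :=
      ⟨fun v hv => dif_neg hv,
        fun v hv => by rw [hws v hv]; exact hu0 _ (Finset.mem_image_of_mem _ hv),
        hsum, rfl⟩
    have hp1 : p.1 = ∑ v ∈ s, w v • v := by rw [hcombo, sum_smul_pair]
    have hp2 : p.2 = ∑ v ∈ s, w v • phi K hK v := by rw [hcombo, sum_smul_pair]
    constructor
    · rw [hp1]; exact mem_space_of_mem_hull K hs hrep.mem_convexHull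
    · rw [hp2, hp1, fmap_eq K hK hs hrep]

/-- `gmap` as a linear map. -/
def gLin : (Fin (nn K hK) → ℝ) →ₗ[ℝ] (Fin m → ℝ) :=
  ∑ v ∈ (L K hK).attach, (LinearMap.proj (eqv K hK v) : ((Fin (nn K hK) → ℝ)) →ₗ[ℝ] ℝ).smulRight
    (v : Fin m → ℝ)

lemma gLin_apply (y) : gLin K hK y = gmap K hK y := by
  rw [gLin, gmap, LinearMap.sum_apply]
  exact Finset.sum_congr rfl fun v _ => rfl


lemma gmap_add (y z) : gmap K hK (y + z) = gmap K hK y + gmap K hK z := by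
  rw [← gLin_apply, ← gLin_apply, ← gLin_apply, map_add]

lemma gmap_smul (c : ℝ) (y) : gmap K hK (c • y) = c • gmap K hK y := by
  rw [← gLin_apply, ← gLin_apply, map_smul]

lemma Tfun_linear : IsLinearMap ℝ
    (fun y => ((y, gmap K hK y) : (Fin (nn K hK) → ℝ) × (Fin m → ℝ))) := by
  constructor
  · intro y z
    rw [Prod.mk_add_mk, gmap_add]
  · intro c y
    rw [Prod.smul_mk, gmap_smul]

lemma graph_gmap_eq :
    {p : (Fin (nn K hK) → ℝ) × (Fin m → ℝ) |
        p.1 ∈ (Delta K hK).space ∧ p.2 = gmap K hK p.1}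
      = ⋃ t ∈ (Delta K hK).faces, convexHull ℝ
          ((t.image (fun y => (y, gmap K hK y)) : Finset _)
            : Set ((Fin (nn K hK) → ℝ) × (Fin m → ℝ))) := by
  have himg : ∀ t : Finset (Fin (nn K hK) → ℝ),
      (fun y => ((y, gmap K hK y) : (Fin (nn K hK) → ℝ) × (Fin m → ℝ))) ''
          convexHull ℝ (t : Set _)
        = convexHull ℝ ((t.image (fun y => (y, gmap K hK y)) : Finset _) : Set _) := by
    intro t
    rw [Finset.coe_image, ← (Tfun_linear K hK).image_convexHull]
  ext p
  simp only [Set.mem_setOf_eq, Set.mem_iUnion₂]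
  constructor
  · rintro ⟨hp1, hp2⟩
    rw [SimplicialComplex.space, Set.mem_iUnion₂] at hp1
    obtain ⟨t, ht, hy⟩ := hp1
    refine ⟨t, ht, ?_⟩
    rw [← himg]
    exact ⟨p.1, hy, Prod.ext rfl hp2.symm⟩
  · rintro ⟨t, ht, hp⟩
    rw [← himg] at hp
    obtain ⟨y, hy, rfl⟩ := hp
    exact ⟨Set.mem_biUnion ht hy, rfl⟩

lemma image_g_image_phi {s} (hs : s ∈ K.faces) :
    (s.image (phi K hK)).image (gmap K hK) = s := by
  rw [Finset.image_image]
  have h : Finset.image (gmap K hK ∘ phi K hK) s = Finset.image id s :=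
    Finset.image_congr (fun v hv => gmap_phi K hK (subset_L K hK hs hv))
  rw [h, Finset.image_id]


end SB
end SB

open SB

/-- Every polyhedron `P ⊆ ℝᵐ` with a triangulation `Σ` is PL-homeomorphic to a
rational polyhedron `Q ⊆ ℝⁿ`, via a map carrying `Σ` to a unimodular
triangulation `Δ` of `Q` isomorphic to `Σ` as a poset. -/
theorem stmt8 {m : ℕ} (P : Set (Fin m → ℝ))
    (K : SimplicialComplex ℝ (Fin m → ℝ)) (hKfin : K.faces.Finite)
    (hKP : K.space = P) :
    ∃ (n : ℕ) (Q : Set (Fin n → ℝ)) (Δ : SimplicialComplex ℝ (Fin n → ℝ))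
      (f : (Fin m → ℝ) → (Fin n → ℝ)) (g : (Fin n → ℝ) → (Fin m → ℝ)),
      IsRatPolyhedron Q ∧ Δ.space = Q ∧ Δ.faces.Finite ∧
      (∀ t ∈ Δ.faces, IsUnimodular t) ∧
      -- f is a PL homeomorphism from P onto Q with PL inverse g
      ContinuousOn f P ∧ Set.BijOn f P Q ∧ IsPolyhedron (graphOn f P) ∧
      ContinuousOn g Q ∧ (∀ x ∈ P, g (f x) = x) ∧ (∀ y ∈ Q, f (g y) = y) ∧
      IsPolyhedron (graphOn g Q) ∧
      -- f carries K to Δ, inducing a poset isomorphism of the face posets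
      ∃ e : {s : Finset (Fin m → ℝ) // s ∈ K.faces} ≃o
            {t : Finset (Fin n → ℝ) // t ∈ Δ.faces},
        ∀ s : {s : Finset (Fin m → ℝ) // s ∈ K.faces},
          f '' convexHull ℝ (s.1 : Set (Fin m → ℝ)) =
            convexHull ℝ ((e s).1 : Set (Fin n → ℝ)) := by
  subst hKP
  classical
  have hΔfin : (Delta K hKfin).faces.Finite := hKfin.image _
  refine ⟨nn K hKfin, (Delta K hKfin).space, Delta K hKfin, fmap K hKfin, gmap K hKfin,
    ?_, rfl, hΔfin, fun t ht => isUnimodular_face K hKfin ht, continuousOn_fmap K hKfin,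
    ?_, ?_, (continuous_gmap K hKfin).continuousOn, ?_, ?_, ?_, ?_⟩
  -- IsRatPolyhedron
  · refine ⟨hΔfin.toFinset, ?_, ?_⟩
    · intro t ht x hx
      rw [Set.Finite.mem_toFinset] at ht
      obtain ⟨s, hs, rfl⟩ := ht
      obtain ⟨u, hu, rfl⟩ := Finset.mem_image.1 hx
      intro i
      rw [phi_apply K hKfin (subset_L K hKfin hs hu)]
      by_cases h : i = eqv K hKfin ⟨u, subset_L K hKfin hs hu⟩
      · exact ⟨1, by simp [h]⟩
      · exact ⟨0, by simp [h]⟩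
    · ext y
      simp only [SimplicialComplex.space, Set.mem_iUnion, Set.Finite.mem_toFinset]
  -- BijOn
  · refine ⟨?_, ?_, ?_⟩
    · intro x hx
      rw [SimplicialComplex.space, Set.mem_iUnion₂] at hx
      obtain ⟨s, hs, hxs⟩ := hx
      obtain ⟨w, hw⟩ := exists_isRep hxs
      exact Set.mem_biUnion (⟨s, hs, rfl⟩ : _ ∈ (Delta K hKfin).faces)
        (fmap_mem K hKfin hs hw)
    · intro x hx y hy heq
      rw [SimplicialComplex.space, Set.mem_iUnion₂] at hx hy
      obtain ⟨s, hs, hxs⟩ := hx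
      obtain ⟨t, ht, hyt⟩ := hy
      obtain ⟨w, hw⟩ := exists_isRep hxs
      obtain ⟨w', hw'⟩ := exists_isRep hyt
      rw [← gmap_fmap K hKfin hs hw, ← gmap_fmap K hKfin ht hw', heq]
    · intro y hy
      rw [SimplicialComplex.space, Set.mem_iUnion₂] at hy
      obtain ⟨t, ht, hyt⟩ := hy
      obtain ⟨s, hs, rfl⟩ := ht
      obtain ⟨w, hw, _⟩ := exists_rep_of_mem_image_hull K hKfin hs hyt
      exact ⟨gmap K hKfin y, mem_space_of_mem_hull K hs hw.mem_convexHull,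
        fmap_gmap K hKfin hs hyt⟩
  -- graph of f is a polyhedron
  · refine ⟨hKfin.toFinset.image (fun s => s.image (fun v => (v, phi K hKfin v))), ?_⟩
    rw [show graphOn (fmap K hKfin) K.space
        = {p : (Fin m → ℝ) × (Fin (nn K hKfin) → ℝ) |
            p.1 ∈ K.space ∧ p.2 = fmap K hKfin p.1} from rfl,
      graph_fmap_eq K hKfin]
    ext p
    simp only [Set.mem_iUnion, Finset.mem_image, Set.Finite.mem_toFinset]
    constructor
    · rintro ⟨s, hs, hp⟩
      exact ⟨_, ⟨s, hs, rfl⟩, hp⟩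
    · rintro ⟨t, ⟨s, hs, rfl⟩, hp⟩
      exact ⟨s, hs, hp⟩
  -- g ∘ f = id
  · intro x hx
    rw [SimplicialComplex.space, Set.mem_iUnion₂] at hx
    obtain ⟨s, hs, hxs⟩ := hx
    obtain ⟨w, hw⟩ := exists_isRep hxs
    exact gmap_fmap K hKfin hs hw
  -- f ∘ g = id
  · intro y hy
    rw [SimplicialComplex.space, Set.mem_iUnion₂] at hy
    obtain ⟨t, ht, hyt⟩ := hy
    obtain ⟨s, hs, rfl⟩ := ht
    exact fmap_gmap K hKfin hs hyt
  -- graph of g is a polyhedron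
  · refine ⟨hΔfin.toFinset.image (fun t => t.image (fun y => (y, gmap K hKfin y))), ?_⟩
    rw [show graphOn (gmap K hKfin) (Delta K hKfin).space
        = {p : (Fin (nn K hKfin) → ℝ) × (Fin m → ℝ) |
            p.1 ∈ (Delta K hKfin).space ∧ p.2 = gmap K hKfin p.1} from rfl,
      graph_gmap_eq K hKfin]
    ext p
    simp only [Set.mem_iUnion, Finset.mem_image, Set.Finite.mem_toFinset]
    constructor
    · rintro ⟨t, ht, hp⟩
      exact ⟨_, ⟨t, ht, rfl⟩, hp⟩
    · rintro ⟨t', ⟨t, ht, rfl⟩, hp⟩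
      exact ⟨t, ht, hp⟩
  -- the order isomorphism
  · have hinv : ∀ t : {t // t ∈ (Delta K hKfin).faces},
        t.1.image (gmap K hKfin) ∈ K.faces := by
      rintro ⟨t, ht⟩
      obtain ⟨s, hs, rfl⟩ := ht
      rw [image_g_image_phi K hKfin hs]
      exact hs
    refine ⟨{ toFun := fun s => ⟨s.1.image (phi K hKfin), ⟨s.1, s.2, rfl⟩⟩
              invFun := fun t => ⟨t.1.image (gmap K hKfin), hinv t⟩
              left_inv := fun s => Subtype.ext (image_g_image_phi K hKfin s.2)
              right_inv := fun t => Subtype.ext (by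
                show Finset.image (phi K hKfin) (Finset.image (gmap K hKfin) t.1) = t.1
                obtain ⟨s, hs, h⟩ := t.2
                rw [← h, image_g_image_phi K hKfin hs])
              map_rel_iff' := ?_ }, ?_⟩
    · intro s₁ s₂
      show s₁.1.image (phi K hKfin) ≤ s₂.1.image (phi K hKfin) ↔ s₁ ≤ s₂
      rw [← Subtype.coe_le_coe]
      constructor
      · intro h v hv
        obtain ⟨u, hu, hvu⟩ := Finset.mem_image.1 (h (Finset.mem_image_of_mem _ hv))
        exact (phi_injOn K hKfin (subset_L K hKfin s₂.2 hu)
          (subset_L K hKfin s₁.2 hv) hvu) ▸ hu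
      · intro h
        exact Finset.image_subset_image h
    · intro s
      exact image_hull K hKfin s.2
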